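/- Let μ : ℝ → ℝ be continuous, and suppose that either (i) μ(0) > 0, or (ii) μ(0) = 0 and there exist ε > 0 and a Lebesgue measure-zero set Z ⊆ [−ε, 0] such that μ(w) > 0 for all w ∈ [−ε, 0] \ Z and the function w ↦ 1/μ(w) is Lebesgue integrable on [−ε, 0]. Then μ is not a minimal function: there exist τ > 0, a differentiable w : [0,τ) → ℝ with w(0) = 0 and ẇ(t) = −μ(w(t)) for all t ∈ [0,τ), and a time t ∈ [0,τ) with w(t) < 0. -/

import Mathlib

open Set MeasureTheory Filter Topology

lemma aux_not_minimal
    (μ : ℝ → ℝ) (hμc : Continuous μ) (ε δ : ℝ) (hε : 0 < ε) (hδ : 0 ≤ δ)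
    (Z : Set ℝ) (hZI : Z ⊆ Icc (-ε) δ) (hZ0 : volume Z = 0)
    (hpos : ∀ v ∈ Icc (-ε) δ \ Z, 0 < μ v)
    (hint : IntegrableOn (fun v => 1 / μ v) (Icc (-ε) δ) volume)
    (hcase : 0 < δ ∨ μ 0 = 0) :
    ∃ τ > (0 : ℝ), ∃ w : ℝ → ℝ, w 0 = 0 ∧
      (∀ t ∈ Set.Ico (0 : ℝ) τ, HasDerivAt w (-μ (w t)) t) ∧
      ∃ t ∈ Set.Ico (0 : ℝ) τ, w t < 0 := by
  have hεδ : -ε < δ := by linarith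
  set f : ℝ → ℝ := fun v => 1 / μ v with hfdef
  have hfm : Measurable f := measurable_const.div hμc.measurable
  have hZae : ∀ᵐ v ∂(volume : Measure ℝ), v ∉ Z := by
    rw [← MeasureTheory.measure_eq_zero_iff_ae_notMem]; exact hZ0
  have haeIoc : ∀ p q : ℝ, -ε ≤ p → q ≤ δ →
      (∀ᵐ v ∂(volume.restrict (Ioc p q)), 0 ≤ f v) := by
    intro p q hp hq
    filter_upwards [ae_restrict_mem measurableSet_Ioc, ae_restrict_of_ae hZae] with v hv hvZ
    have hvI : v ∈ Icc (-ε) δ := ⟨le_trans hp hv.1.le, le_trans hv.2 hq⟩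
    exact le_of_lt (one_div_pos.2 (hpos v ⟨hvI, hvZ⟩))
  have hintIoc : ∀ p q : ℝ, -ε ≤ p → q ≤ δ → IntegrableOn f (Ioc p q) volume := by
    intro p q hp hq
    exact hint.mono_set (fun v hv => ⟨le_trans hp hv.1.le, le_trans hv.2 hq⟩)
  set G : ℝ → ℝ := fun x => ∫ v in Ioc x δ, f v with hGdef
  have hGδ : G δ = 0 := by rw [hGdef]; simp
  have hGsub : ∀ x y : ℝ, -ε ≤ x → x ≤ y → y ≤ δ →
      G x = (∫ v in Ioc x y, f v) + G y := by
    intro x y hx hxy hyδ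
    rw [hGdef]
    simp only
    rw [← Set.Ioc_union_Ioc_eq_Ioc hxy hyδ,
      setIntegral_union (Set.Ioc_disjoint_Ioc_of_le le_rfl) measurableSet_Ioc
        (hintIoc x y hx hyδ) (hintIoc y δ (le_trans hx hxy) le_rfl)]
  have hGpos : ∀ x y : ℝ, -ε ≤ x → x < y → y ≤ δ → 0 < ∫ v in Ioc x y, f v := by
    intro x y hx hxy hy
    rw [setIntegral_pos_iff_support_of_nonneg_ae (haeIoc x y hx hy)
      (hintIoc x y hx hy)]
    have hsub : Ioc x y \ Z ⊆ Function.support f ∩ Ioc x y := by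
      intro v hv
      have hvI : v ∈ Icc (-ε) δ := ⟨le_trans hx hv.1.1.le, le_trans hv.1.2 hy⟩
      exact ⟨ne_of_gt (one_div_pos.2 (hpos v ⟨hvI, hv.2⟩)), hv.1⟩
    refine lt_of_lt_of_le ?_ (measure_mono hsub)
    rw [measure_diff_null hZ0, Real.volume_Ioc]
    exact ENNReal.ofReal_pos.2 (by linarith)
  set I : Set ℝ := Icc (-ε) δ with hIdef
  have hGanti : ∀ x ∈ I, ∀ y ∈ I, x < y → G y < G x := by
    intro x hx y hy hxy
    have h1 := hGsub x y hx.1 hxy.le hy.2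
    have h2 := hGpos x y hx.1 hxy hy.2
    linarith
  have hGle : ∀ x ∈ I, ∀ y ∈ I, x ≤ y → G y ≤ G x := by
    intro x hx y hy hxy
    rcases eq_or_lt_of_le hxy with h | h
    · rw [h]
    · exact (hGanti x hx y hy h).le
  have hGlt : ∀ x ∈ I, ∀ y ∈ I, G x < G y → y < x := by
    intro x hx y hy h
    rcases lt_trichotomy x y with h' | h' | h'
    · exact absurd (hGanti x hx y hy h') (by linarith)
    · exact absurd h (by rw [h']; exact lt_irrefl _)
    · exact h'
  have hGinj : ∀ x ∈ I, ∀ y ∈ I, G x = G y → x = y := by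
    intro x hx y hy h
    rcases lt_trichotomy x y with h' | h' | h'
    · exact absurd (hGanti x hx y hy h') (by rw [h]; exact lt_irrefl _)
    · exact h'
    · exact absurd (hGanti y hy x hx h') (by rw [h]; exact lt_irrefl _)
  have h0I : (0 : ℝ) ∈ I := ⟨by linarith, hδ⟩
  have hεI : -ε ∈ I := ⟨le_rfl, hεδ.le⟩
  have hδI : δ ∈ I := ⟨hεδ.le, le_rfl⟩
  set M : ℝ := G (-ε) with hMdef
  set a : ℝ := G 0 with hadef
  have ha0 : 0 ≤ a := by
    have := hGle 0 h0I δ hδI hδ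
    rw [hGδ] at this; exact this
  have hτpos : 0 < M - a := by
    have := hGanti (-ε) hεI 0 h0I (by linarith)
    linarith
  have haM : a ≤ M := by linarith
  have h0M : 0 ≤ M := by linarith
  have hGcont : ContinuousOn G I := by
    have h1 : ContinuousOn (fun x => ∫ t in Ioc (-ε) x, f t) I :=
      intervalIntegral.continuousOn_primitive hint
    have h2 : ∀ x ∈ I, G x = (∫ t in Ioc (-ε) δ, f t) - ∫ t in Ioc (-ε) x, f t := by
      intro x hx
      have := hGsub (-ε) x le_rfl hx.1 hx.2
      have hG0 : G (-ε) = ∫ t in Ioc (-ε) δ, f t := rfl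
      linarith
    exact (continuousOn_const.sub h1).congr h2
  have hsurj : ∀ s ∈ Icc (0 : ℝ) M, ∃ x, x ∈ I ∧ G x = s := by
    intro s hs
    have hmem : s ∈ Icc (G δ) (G (-ε)) := by rw [hGδ]; exact hs
    have := intermediate_value_Icc' hεδ.le hGcont hmem
    obtain ⟨x, hx, hGx⟩ := this
    exact ⟨x, hx, hGx⟩
  set S : ℝ → ℝ := fun s => if h : s ∈ Icc (0 : ℝ) M then (hsurj s h).choose else 0
    with hSdef
  have hS : ∀ s ∈ Icc (0 : ℝ) M, S s ∈ I ∧ G (S s) = s := by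
    intro s hs
    rw [hSdef]
    simp only [dif_pos hs]
    exact (hsurj s hs).choose_spec
  have hSG : ∀ x ∈ I, S (G x) = x := by
    intro x hx
    have hmem : G x ∈ Icc (0 : ℝ) M := by
      constructor
      · have := hGle x hx δ hδI hx.2; rw [hGδ] at this; linarith
      · exact hGle (-ε) hεI x hx hx.1
    exact hGinj _ (hS _ hmem).1 x hx (hS _ hmem).2
  set clamp : ℝ → ℝ := fun t => max 0 (min (t + a) M) with hclampdef
  have hclampmem : ∀ t, clamp t ∈ Icc (0 : ℝ) M := by
    intro t
    exact ⟨le_max_left _ _, max_le h0M (min_le_right _ _)⟩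
  have hclamp_of : ∀ t : ℝ, 0 ≤ t + a → t + a ≤ M → clamp t = t + a := by
    intro t h1 h2
    rw [hclampdef]
    simp only
    rw [min_eq_left h2, max_eq_right h1]
  set w : ℝ → ℝ := fun t => S (clamp t) with hwdef
  have hwmem : ∀ t, w t ∈ I := fun t => (hS _ (hclampmem t)).1
  have hGw : ∀ t, G (w t) = clamp t := fun t => (hS _ (hclampmem t)).2
  have hw0 : w 0 = 0 := by
    have h1 : clamp 0 = a := by
      rw [hclamp_of 0 (by linarith) (by linarith)]; ring
    rw [hwdef]; simp only [h1, hadef]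
    exact hSG 0 h0I
  refine ⟨M - a, hτpos, w, hw0, ?_, ?_⟩
  · -- derivatives
    intro t₀ ht₀
    set x₀ : ℝ := w t₀ with hx₀def
    have hx₀I : x₀ ∈ I := hwmem t₀
    have hclampt₀ : clamp t₀ = t₀ + a := hclamp_of t₀ (by linarith [ht₀.1]) (by linarith [ht₀.2])
    have hGx₀ : G x₀ = t₀ + a := by rw [hx₀def, hGw, hclampt₀]
    have hnonnegμ : ∀ x ∈ I, 0 ≤ μ x := by
      intro x hx
      by_contra hneg
      push_neg at hneg
      obtain ⟨r, hr, hball⟩ : ∃ r > (0 : ℝ), ∀ y, |y - x| < r → μ y < 0 := by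
        obtain ⟨r, hr, h⟩ := Metric.continuousAt_iff.1 hμc.continuousAt (-μ x) (by linarith)
        refine ⟨r, hr, fun y hy => ?_⟩
        have h2 := h (show dist y x < r by rwa [Real.dist_eq])
        rw [Real.dist_eq] at h2
        have h3 := (abs_lt.1 h2).2
        linarith
      have hlohi : max (x - r) (-ε) < min (x + r) δ := by
        apply max_lt
        · apply lt_min <;> [linarith; linarith [hx.2]]
        · apply lt_min <;> [linarith [hx.1]; linarith]
      have hsub : Ioo (max (x - r) (-ε)) (min (x + r) δ) ⊆ Z := by
        intro y hy
        have hyI : y ∈ I := ⟨le_of_lt (lt_of_le_of_lt (le_max_right _ _) hy.1),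
          le_of_lt (lt_of_lt_of_le hy.2 (min_le_right _ _))⟩
        have hyb : |y - x| < r := by
          rw [abs_lt]
          constructor
          · have := lt_of_le_of_lt (le_max_left (x - r) (-ε)) hy.1; linarith
          · have := lt_of_lt_of_le hy.2 (min_le_left (x + r) δ); linarith
        by_contra hyZ
        exact absurd (hpos y ⟨hyI, hyZ⟩) (not_lt.2 (hball y hyb).le)
      have hz : volume (Ioo (max (x - r) (-ε)) (min (x + r) δ)) = 0 :=
        le_antisymm (hZ0 ▸ measure_mono hsub) (by simp)
      rw [Real.volume_Ioo] at hz
      have := ENNReal.ofReal_eq_zero.1 hz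
      linarith
    by_cases hμx : 0 < μ x₀
    · -- good point: inverse function theorem
      have hta : 0 < t₀ + a := by
        rcases (show (0:ℝ) ≤ t₀ + a by linarith [ht₀.1]).lt_or_eq with h | h
        · exact h
        · exfalso
          have ht0 : t₀ = 0 := by linarith [ht₀.1]
          have ha' : a = 0 := by linarith
          rcases hcase with hδpos | hμ0
          · have h2 := hGanti 0 h0I δ hδI hδpos
            rw [hGδ] at h2
            linarith
          · have hx0 : x₀ = 0 := by rw [hx₀def, ht0, hw0]
            rw [hx0, hμ0] at hμx
            exact lt_irrefl 0 hμx
      have hx₀lt : x₀ < δ := by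
        rcases hx₀I.2.lt_or_eq with h | h
        · exact h
        · exfalso; rw [h, hGδ] at hGx₀; linarith
      have hx₀gt : -ε < x₀ := by
        rcases hx₀I.1.lt_or_eq with h | h
        · exact h
        · exfalso
          rw [← h, ← hMdef] at hGx₀
          linarith [ht₀.2]
      have hii : IntervalIntegrable f volume x₀ δ := by
        rw [intervalIntegrable_iff_integrableOn_Ioc_of_le hx₀I.2]
        exact hintIoc x₀ δ hx₀I.1 le_rfl
      have hmeasAt : StronglyMeasurableAtFilter f (𝓝 x₀) volume :=
        hfm.stronglyMeasurable.stronglyMeasurableAtFilter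
      have hcf : ContinuousAt f x₀ :=
        ContinuousAt.div continuousAt_const hμc.continuousAt (ne_of_gt hμx)
      have hH : HasDerivAt (fun u => ∫ v in u..δ, f v) (-f x₀) x₀ :=
        intervalIntegral.integral_hasDerivAt_left hii hmeasAt hcf
      have hGH : (fun x => G x - a) =ᶠ[𝓝 x₀] fun u => (∫ v in u..δ, f v) - a := by
        filter_upwards [Iio_mem_nhds hx₀lt] with u hu
        rw [intervalIntegral.integral_of_le (le_of_lt hu)]
      have hG' : HasDerivAt (fun x => G x - a) (-f x₀) x₀ :=
        (hH.sub_const a).congr_of_eventuallyEq hGH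
      have hcw : ContinuousAt w t₀ := by
        rw [ContinuousAt, ← hx₀def, Metric.tendsto_nhds]
        intro η hη
        set p : ℝ := max (x₀ - η) (-ε) with hpdef
        set q : ℝ := min (x₀ + η) δ with hqdef
        have hpI : p ∈ I := ⟨le_max_right _ _, max_le (by linarith [hx₀I.2]) hεδ.le⟩
        have hqI : q ∈ I := ⟨le_min (by linarith [hx₀I.1]) hεδ.le, min_le_right _ _⟩
        have hpx : p < x₀ := max_lt (by linarith) hx₀gt
        have hxq : x₀ < q := lt_min (by linarith) hx₀lt
        have hGq : G q < t₀ + a := by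
          have := hGanti x₀ hx₀I q hqI hxq; linarith
        have hGp : t₀ + a < G p := by
          have := hGanti p hpI x₀ hx₀I hpx; linarith
        have hGq0 : 0 ≤ G q := by
          have := hGle q hqI δ hδI hqI.2; rw [hGδ] at this; linarith
        have hGpM : G p ≤ M := hGle (-ε) hεI p hpI hpI.1
        filter_upwards [Ioo_mem_nhds (show G q - a < t₀ by linarith)
          (show t₀ < G p - a by linarith)] with y hy
        have hcy : clamp y = y + a := hclamp_of y (by linarith [hy.1]) (by linarith [hy.2])
        have hGwy : G (w y) = y + a := by rw [hGw, hcy]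
        have h1 : p < w y := by
          apply hGlt (w y) (hwmem y) p hpI
          rw [hGwy]; linarith [hy.2]
        have h2 : w y < q := by
          apply hGlt q hqI (w y) (hwmem y)
          rw [hGwy]; linarith [hy.1]
        rw [Real.dist_eq, abs_lt]
        constructor
        · have := le_max_left (x₀ - η) (-ε); linarith
        · have := min_le_left (x₀ + η) δ; linarith
      have hfg : ∀ᶠ y in 𝓝 t₀, (fun x => G x - a) (w y) = y := by
        filter_upwards [Ioo_mem_nhds (show -a < t₀ by linarith)
          (show t₀ < M - a from ht₀.2)] with y hy
        have hcy : clamp y = y + a := hclamp_of y (by linarith [hy.1]) (by linarith [hy.2])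
        show G (w y) - a = y
        rw [hGw, hcy]; ring
      have hne : -f x₀ ≠ 0 := by
        have : 0 < f x₀ := one_div_pos.2 hμx
        intro h; rw [neg_eq_zero] at h; linarith
      have hinv := HasDerivAt.of_local_left_inverse hcw (hx₀def ▸ hG') hne hfg
      have heq : (-f x₀)⁻¹ = -μ x₀ := by
        rw [hfdef]
        simp only
        rw [one_div, ← neg_inv, inv_inv]
      rw [heq] at hinv
      exact hinv
    · -- bad point: derivative zero via squeeze
      have hμx0 : μ x₀ = 0 := le_antisymm (not_lt.1 hμx) (hnonnegμ x₀ hx₀I)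
      rw [hμx0, neg_zero]
      rw [hasDerivAt_iff_isLittleO]
      simp only [smul_zero, sub_zero]
      rw [Asymptotics.isLittleO_iff]
      intro c hc
      obtain ⟨r, hr, hball⟩ : ∃ r > (0 : ℝ), ∀ y, |y - x₀| ≤ r → μ y < c := by
        obtain ⟨r', hr', h⟩ := Metric.continuousAt_iff.1 hμc.continuousAt c hc
        refine ⟨r' / 2, by linarith, fun y hy => ?_⟩
        have h2 := h (show dist y x₀ < r' by rw [Real.dist_eq]; linarith)
        rw [Real.dist_eq, hμx0, sub_zero] at h2
        exact (abs_lt.1 h2).2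
      have hkey : ∀ s ∈ Icc (0 : ℝ) M, c * |s - (t₀ + a)| < r →
          |S s - x₀| ≤ c * |s - (t₀ + a)| := by
        intro s hs hsr
        have hxI : S s ∈ I := (hS s hs).1
        have hGx : G (S s) = s := (hS s hs).2
        set x : ℝ := S s with hxdef
        rcases le_total (t₀ + a) s with hle | hle
        · -- x ≤ x₀
          have hxx : x ≤ x₀ := by
            by_contra h
            push_neg at h
            have := hGanti x₀ hx₀I x hxI h
            rw [hGx, hGx₀] at this
            linarith
          have habs : |s - (t₀ + a)| = s - (t₀ + a) := abs_of_nonneg (by linarith)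
          set p : ℝ := max x (x₀ - r) with hpdef
          have hpI : p ∈ I := ⟨le_trans hxI.1 (le_max_left _ _),
            max_le (le_trans hxx hx₀I.2) (by linarith [hx₀I.2])⟩
          have hpx₀ : p ≤ x₀ := max_le hxx (by linarith)
          have hsub2 : G x = (∫ v in Ioc x x₀, f v) + G x₀ := hGsub x x₀ hxI.1 hxx hx₀I.2
          have hint1 : (∫ v in Ioc p x₀, f v) ≤ ∫ v in Ioc x x₀, f v :=
            setIntegral_mono_set (hintIoc x x₀ hxI.1 hx₀I.2) (haeIoc x x₀ hxI.1 hx₀I.2)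
              (Set.Ioc_subset_Ioc_left (le_max_left _ _)).eventuallyLE
          have hmono : (∫ _ in Ioc p x₀, (1 / c : ℝ)) ≤ ∫ v in Ioc p x₀, f v := by
            apply setIntegral_mono_ae_restrict
              (integrableOn_const measure_Ioc_lt_top.ne)
              (hintIoc p x₀ hpI.1 hx₀I.2)
            filter_upwards [ae_restrict_mem measurableSet_Ioc, ae_restrict_of_ae hZae]
              with v hv hvZ
            have hvI : v ∈ I := ⟨le_trans hpI.1 hv.1.le, le_trans hv.2 hx₀I.2⟩
            have hμv : 0 < μ v := hpos v ⟨hvI, hvZ⟩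
            have hvr : |v - x₀| ≤ r := by
              rw [abs_le]
              constructor
              · have := le_max_right x (x₀ - r); linarith [hv.1]
              · linarith [hv.2]
            exact one_div_le_one_div_of_le hμv (hball v hvr).le
          have hconst : (∫ _ in Ioc p x₀, (1 / c : ℝ)) = (x₀ - p) * (1 / c) := by
            rw [setIntegral_const, Real.volume_real_Ioc_of_le (by linarith), smul_eq_mul]
          have h5 : (x₀ - p) * (1 / c) ≤ s - (t₀ + a) := by
            rw [hGx, hGx₀] at hsub2
            linarith [hint1, hmono, hconst.symm.le]
          rcases max_cases x (x₀ - r) with ⟨hpe, _⟩ | ⟨hpe, _⟩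
          · rw [habs]
            have habs2 : |x - x₀| = x₀ - x := by
              rw [abs_of_nonpos (by linarith : x - x₀ ≤ 0)]; ring
            rw [habs2]
            rw [hpdef.trans hpe, mul_one_div] at h5
            have h6 := (div_le_iff₀ hc).1 h5
            linarith
          · exfalso
            rw [habs] at hsr
            rw [hpdef.trans hpe, mul_one_div] at h5
            have h6 : r / c ≤ s - (t₀ + a) := by
              have : (x₀ - (x₀ - r)) / c = r / c := by ring_nf
              linarith [this ▸ h5]
            have h7 := (div_le_iff₀ hc).1 h6
            linarith
        · -- x₀ ≤ x
          have hxx : x₀ ≤ x := by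
            by_contra h
            push_neg at h
            have := hGanti x hxI x₀ hx₀I h
            rw [hGx, hGx₀] at this
            linarith
          have habs : |s - (t₀ + a)| = t₀ + a - s := by
            rw [abs_of_nonpos (by linarith)]; ring
          set q : ℝ := min x (x₀ + r) with hqdef
          have hqI : q ∈ I := ⟨le_trans hx₀I.1 (le_min hxx (by linarith)),
            min_le_of_left_le hxI.2⟩
          have hx₀q : x₀ ≤ q := le_min hxx (by linarith)
          have hsub2 : G x₀ = (∫ v in Ioc x₀ x, f v) + G x := hGsub x₀ x hx₀I.1 hxx hxI.2
          have hint1 : (∫ v in Ioc x₀ q, f v) ≤ ∫ v in Ioc x₀ x, f v :=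
            setIntegral_mono_set (hintIoc x₀ x hx₀I.1 hxI.2) (haeIoc x₀ x hx₀I.1 hxI.2)
              (Set.Ioc_subset_Ioc_right (min_le_left _ _)).eventuallyLE
          have hmono : (∫ _ in Ioc x₀ q, (1 / c : ℝ)) ≤ ∫ v in Ioc x₀ q, f v := by
            apply setIntegral_mono_ae_restrict
              (integrableOn_const measure_Ioc_lt_top.ne)
              (hintIoc x₀ q hx₀I.1 hqI.2)
            filter_upwards [ae_restrict_mem measurableSet_Ioc, ae_restrict_of_ae hZae]
              with v hv hvZ
            have hvI : v ∈ I := ⟨le_trans hx₀I.1 hv.1.le, le_trans hv.2 hqI.2⟩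
            have hμv : 0 < μ v := hpos v ⟨hvI, hvZ⟩
            have hvr : |v - x₀| ≤ r := by
              rw [abs_le]
              constructor
              · linarith [hv.1]
              · have := min_le_right x (x₀ + r); linarith [hv.2]
            exact one_div_le_one_div_of_le hμv (hball v hvr).le
          have hconst : (∫ _ in Ioc x₀ q, (1 / c : ℝ)) = (q - x₀) * (1 / c) := by
            rw [setIntegral_const, Real.volume_real_Ioc_of_le (by linarith), smul_eq_mul]
          have h5 : (q - x₀) * (1 / c) ≤ t₀ + a - s := by
            rw [hGx₀, hGx] at hsub2
            linarith [hint1, hmono, hconst.symm.le]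
          rcases min_cases x (x₀ + r) with ⟨hqe, _⟩ | ⟨hqe, _⟩
          · rw [habs]
            have habs2 : |x - x₀| = x - x₀ := abs_of_nonneg (by linarith)
            rw [habs2]
            rw [hqdef.trans hqe, mul_one_div] at h5
            have h6 := (div_le_iff₀ hc).1 h5
            linarith
          · exfalso
            rw [habs] at hsr
            rw [hqdef.trans hqe, mul_one_div] at h5
            have h6 : r / c ≤ t₀ + a - s := by
              have : (x₀ + r - x₀) / c = r / c := by ring_nf
              linarith [this ▸ h5]
            have h7 := (div_le_iff₀ hc).1 h6
            linarith
      have hmem : Metric.ball t₀ (r / c) ∈ 𝓝 t₀ :=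
        Metric.ball_mem_nhds _ (by positivity)
      filter_upwards [hmem] with y hy
      rw [Metric.mem_ball, Real.dist_eq] at hy
      have hclip : |clamp y - (t₀ + a)| ≤ |y - t₀| := by
        rw [← hclampt₀, hclampdef]
        simp only
        rw [max_comm 0 ((y + a) ⊓ M), max_comm 0 ((t₀ + a) ⊓ M)]
        refine le_trans (abs_max_sub_max_le_abs _ _ _) ?_
        refine le_trans (abs_min_sub_min_le_max _ _ _ _) ?_
        simp only [sub_self, abs_zero]
        rw [max_eq_left (abs_nonneg _)]
        have : y + a - (t₀ + a) = y - t₀ := by ring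
        rw [this]
      have hcy : c * |clamp y - (t₀ + a)| < r := by
        have h1 : c * |clamp y - (t₀ + a)| ≤ c * |y - t₀| :=
          mul_le_mul_of_nonneg_left hclip hc.le
        have h2 : c * |y - t₀| < c * (r / c) :=
          mul_lt_mul_of_pos_left hy hc
        rw [mul_div_cancel₀ r (ne_of_gt hc)] at h2
        linarith
      have hkey2 := hkey (clamp y) (hclampmem y) hcy
      rw [Real.norm_eq_abs, Real.norm_eq_abs]
      have hwy : w y = S (clamp y) := rfl
      calc |w y - x₀| = |S (clamp y) - x₀| := by rw [hwy]
        _ ≤ c * |clamp y - (t₀ + a)| := hkey2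
        _ ≤ c * |y - t₀| := mul_le_mul_of_nonneg_left hclip hc.le
  · refine ⟨(M - a) / 2, ⟨by linarith, by linarith⟩, ?_⟩
    have h1 : clamp ((M - a) / 2) = (M - a) / 2 + a := hclamp_of _ (by linarith) (by linarith)
    have h2 : G (w ((M - a) / 2)) = (M - a) / 2 + a := by rw [hGw, h1]
    have h3 : G 0 < G (w ((M - a) / 2)) := by rw [h2, ← hadef]; linarith
    exact hGlt 0 h0I (w ((M - a) / 2)) (hwmem _) h3



/-- Theorem 2, necessity: if `μ(0) > 0`, or `μ(0) = 0` and `μ > 0` a.e. on some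
`[−ε, 0]` with `1/μ` Lebesgue integrable there, then `μ` is not a minimal function: some
solution of `ẇ = −μ(w), w(0) = 0` becomes strictly negative. -/
theorem not_minimal_function_of_integrable
    (μ : ℝ → ℝ) (hμc : Continuous μ)
    (hyp : 0 < μ 0 ∨
      (μ 0 = 0 ∧ ∃ ε > (0 : ℝ), ∃ Z : Set ℝ, Z ⊆ Set.Icc (-ε) (0 : ℝ) ∧
        MeasureTheory.volume Z = 0 ∧
        (∀ v ∈ Set.Icc (-ε) (0 : ℝ) \ Z, 0 < μ v) ∧
        MeasureTheory.IntegrableOn (fun v => 1 / μ v) (Set.Icc (-ε) (0 : ℝ))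
          MeasureTheory.volume)) :
    ∃ τ > (0 : ℝ), ∃ w : ℝ → ℝ, w 0 = 0 ∧
      (∀ t ∈ Set.Ico (0 : ℝ) τ, HasDerivAt w (-μ (w t)) t) ∧
      ∃ t ∈ Set.Ico (0 : ℝ) τ, w t < 0 := by
  rcases hyp with hμ0 | ⟨hμ0, ε, hε, Z, hZI, hZ0, hpos, hint⟩
  · obtain ⟨r, hr, hball⟩ : ∃ r > (0 : ℝ), ∀ y, |y - 0| < r → 0 < μ y := by
      obtain ⟨r, hr, h⟩ := Metric.continuousAt_iff.1 hμc.continuousAt (μ 0) hμ0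
      refine ⟨r, hr, fun y hy => ?_⟩
      have h2 := h (show dist y 0 < r by rwa [Real.dist_eq])
      rw [Real.dist_eq] at h2
      have h3 := (abs_lt.1 h2).1
      linarith
    have hposI : ∀ v ∈ Icc (-(r / 2)) (r / 2), 0 < μ v := by
      intro v hv
      refine hball v ?_
      rw [sub_zero, abs_lt]
      constructor <;> [linarith [hv.1]; linarith [hv.2]]
    refine aux_not_minimal μ hμc (r / 2) (r / 2) (by linarith) (by linarith) ∅
      (empty_subset _) (by simp) (fun v hv => hposI v hv.1) ?_ (Or.inl (by linarith))
    apply ContinuousOn.integrableOn_Icc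
    exact continuousOn_const.div hμc.continuousOn (fun v hv => ne_of_gt (hposI v hv))
  · exact aux_not_minimal μ hμc ε 0 hε le_rfl Z hZI hZ0 hpos hint (Or.inr hμ0)
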